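/- Let χ : ℝ → ℝ be twice continuously differentiable, let t ∈ ℝ and θ ∈ ℝ. Then the function Δt ↦ [θ(5/2 − θ) − 1/2]·χ(t + Δt) + 2(1 − θ)²·χ(t) + (θ − 1/2)(1 − θ)·χ(t − Δt) − χ(t + θΔt) is O(Δt²) as Δt → 0. In other words, the implicit approximation χ^{n+θ} = [θ(5/2−θ)−1/2]χ^{n+1} + 2(1−θ)²χ^n + (θ−1/2)(1−θ)χ^{n−1} is second-order accurate in time. -/

import Mathlib

open Topology Asymptotics

/-- Second-order Taylor bound: a `C²` function minus its first-order Taylor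
polynomial at `0` is `O(x²)` near `0`. -/
lemma taylor_second_order (g : ℝ → ℝ) (hg : ContDiff ℝ 2 g) :
    (fun x : ℝ => g x - g 0 - deriv g 0 * x) =O[𝓝 (0 : ℝ)] fun x : ℝ => x ^ 2 := by
  have hdiff : Differentiable ℝ g := hg.differentiable (by norm_num)
  have hdg : ContDiff ℝ 1 (deriv g) := by
    have := (contDiff_succ_iff_deriv (n := 1)).mp (by exact_mod_cast hg)
    exact this.2.2
  have hdg0 : DifferentiableAt ℝ (deriv g) 0 := (hdg.differentiable (by norm_num)) 0
  have h1 : (fun x : ℝ => deriv g x - deriv g 0) =O[𝓝 (0 : ℝ)] fun x : ℝ => x := by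
    simpa using hdg0.isBigO_sub
  obtain ⟨C, hC⟩ := h1.bound
  rw [Metric.eventually_nhds_iff] at hC
  obtain ⟨r, hr, hball⟩ := hC
  rw [Asymptotics.isBigO_iff]
  refine ⟨|C|, Metric.eventually_nhds_iff.mpr ⟨r, hr, fun x hx => ?_⟩⟩
  have hxr : |x| < r := by simpa [Real.dist_eq] using hx
  -- mean value inequality on `uIcc 0 x`
  have key : ‖(g x - deriv g 0 * x) - (g 0 - deriv g 0 * 0)‖ ≤ (|C| * |x|) * ‖x - 0‖ := by
    refine Convex.norm_image_sub_le_of_norm_hasDerivWithin_le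
      (f := fun y => g y - deriv g 0 * y) (f' := fun y => deriv g y - deriv g 0)
      (s := Set.uIcc 0 x) (fun y hy => ?_) (fun y hy => ?_) (convex_uIcc 0 x) ?_ ?_
    · exact (((hdiff y).hasDerivAt).sub
        (((hasDerivAt_id y).const_mul (deriv g 0)).congr_deriv (mul_one _))).hasDerivWithinAt
    · have hyx : |y| ≤ |x| := by
        rcases Set.mem_uIcc.mp hy with ⟨h1', h2'⟩ | ⟨h1', h2'⟩ <;>
          (rw [abs_le]; constructor <;> linarith [le_abs_self x, neg_abs_le x, abs_nonneg x])
      have hy' : dist y 0 < r := by simpa [Real.dist_eq] using lt_of_le_of_lt hyx hxr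
      calc ‖deriv g y - deriv g 0‖ ≤ C * ‖y‖ := hball hy'
        _ ≤ |C| * ‖y‖ := mul_le_mul_of_nonneg_right (le_abs_self C) (norm_nonneg y)
        _ ≤ |C| * |x| := mul_le_mul_of_nonneg_left (by simpa using hyx) (abs_nonneg C)
    · exact Set.left_mem_uIcc
    · exact Set.right_mem_uIcc
  have : ‖g x - g 0 - deriv g 0 * x‖ ≤ |C| * |x| * |x| := by
    simpa [Real.norm_eq_abs, sub_sub, add_comm] using key
  calc ‖g x - g 0 - deriv g 0 * x‖ ≤ |C| * |x| * |x| := this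
    _ = |C| * ‖x ^ 2‖ := by rw [Real.norm_eq_abs, abs_pow]; ring

/-- Scaled version: `χ(t + c·x) − χ(t) − c·χ'(t)·x = O(x²)`. -/
lemma taylor_scaled (χ : ℝ → ℝ) (hχ : ContDiff ℝ 2 χ) (t c : ℝ) :
    (fun x : ℝ => χ (t + c * x) - χ t - c * deriv χ t * x) =O[𝓝 (0 : ℝ)] fun x : ℝ => x ^ 2 := by
  set g : ℝ → ℝ := fun x => χ (t + c * x) with hgdef
  have hg : ContDiff ℝ 2 g := hχ.comp (contDiff_const.add (contDiff_const.mul contDiff_id))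
  have hg0 : g 0 = χ t := by simp [hgdef]
  have hdg0 : deriv g 0 = c * deriv χ t := by
    have hinner : HasDerivAt (fun x : ℝ => t + c * x) c 0 := by
      exact (((hasDerivAt_id (0:ℝ)).const_mul c).const_add t).congr_deriv (mul_one c)
    have houter : HasDerivAt χ (deriv χ (t + c * 0)) (t + c * 0) :=
      ((hχ.differentiable (by norm_num)) (t + c * 0)).hasDerivAt
    have := (houter.comp 0 hinner).deriv
    simpa [hgdef, mul_comm, Function.comp_def] using this
  have H := taylor_second_order g hg
  rw [hg0, hdg0] at H
  exact H

theorem implicit_approximation_second_order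
    (χ : ℝ → ℝ) (hχ : ContDiff ℝ 2 χ) (t θ : ℝ) :
    (fun Δt : ℝ =>
        (θ * (5/2 - θ) - 1/2) * χ (t + Δt) + 2 * (1 - θ)^2 * χ t
          + (θ - 1/2) * (1 - θ) * χ (t - Δt) - χ (t + θ * Δt))
      =O[𝓝 (0 : ℝ)] fun Δt : ℝ => Δt ^ 2 := by
  have e1 := taylor_scaled χ hχ t 1
  have e2 := taylor_scaled χ hχ t (-1)
  have e3 := taylor_scaled χ hχ t θ
  simp only [one_mul, neg_one_mul, ← sub_eq_add_neg] at e1 e2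
  have h := ((e1.const_mul_left (θ * (5/2 - θ) - 1/2)).add
      (e2.const_mul_left ((θ - 1/2) * (1 - θ)))).sub e3
  refine h.congr_left fun x => ?_
  ring
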